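/- Let D ⊆ ℂⁿ be a ℂ-proper convex domain, let η̂ ∈ ∂D, let n be a unit vector, and let r > 0 be such that the open Euclidean ball B(η̂ − r·n, r) is contained in D. Let z = η̂ − a·n and w = η̂ − b·n with 0 < a, b < r and suppose δ_D(z) = a and δ_D(w) = b. Then k_D(z,w) ≤ |log(a/b)| − log(1 − max(a,b)/(2r)). -/

import Mathlib

open Filter Topology Metric Set

noncomputable section

/-- `ℂⁿ` as a complex Euclidean space. -/
abbrev En (n : ℕ) := EuclideanSpace ℂ (Fin n)

/-- The open unit disc in `ℂ`. -/
def unitDisc : Set ℂ := Metric.ball 0 1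

/-- The Poincaré distance on the unit disc, normalized as
`ρ(ζ₁,ζ₂) = log((1+m)/(1−m))` with `m = |ζ₁−ζ₂|/|1−conj(ζ₂)ζ₁|`. -/
def poincareDist (ζ₁ ζ₂ : ℂ) : ℝ :=
  Real.log ((1 + ‖ζ₁ - ζ₂‖ / ‖1 - (starRingEnd ℂ) ζ₂ * ζ₁‖) /
    (1 - ‖ζ₁ - ζ₂‖ / ‖1 - (starRingEnd ℂ) ζ₂ * ζ₁‖))

/-- The (one-disc) Kobayashi distance of a (convex) domain `D`. -/
def kob {E : Type*} [NormedAddCommGroup E] [NormedSpace ℂ E] (D : Set E) (z w : E) : ℝ :=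
  sInf { c | ∃ φ : ℂ → E, DifferentiableOn ℂ φ unitDisc ∧ MapsTo φ unitDisc D ∧
    ∃ ζ₁ ∈ unitDisc, ∃ ζ₂ ∈ unitDisc, φ ζ₁ = z ∧ φ ζ₂ = w ∧ c = poincareDist ζ₁ ζ₂ }

/-- A `ℂ`-proper convex domain: nonempty, open, convex, containing no complex affine line. -/
def IsCProperConvex {E : Type*} [NormedAddCommGroup E] [NormedSpace ℂ E] (D : Set E) : Prop :=
  D.Nonempty ∧ IsOpen D ∧ Convex ℝ D ∧ ¬ ∃ z v : E, v ≠ 0 ∧ ∀ ζ : ℂ, z + ζ • v ∈ D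

/-- A complex geodesic of `D`: a holomorphic isometry from the Poincaré disc into `D`. -/
def IsComplexGeodesic {E : Type*} [NormedAddCommGroup E] [NormedSpace ℂ E]
    (D : Set E) (φ : ℂ → E) : Prop :=
  DifferentiableOn ℂ φ unitDisc ∧ MapsTo φ unitDisc D ∧
    ∀ ζ₁ ∈ unitDisc, ∀ ζ₂ ∈ unitDisc, kob D (φ ζ₁) (φ ζ₂) = poincareDist ζ₁ ζ₂

/-- `φ` has endpoint `ξ`: `φ(t) → ξ` as `t → 1⁻` along the real axis. -/
def HasEndpoint {E : Type*} [NormedAddCommGroup E] [NormedSpace ℂ E]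
    (φ : ℂ → E) (ξ : E) : Prop :=
  Tendsto (fun t : ℝ => φ (t : ℂ)) (𝓝[<] (1 : ℝ)) (𝓝 ξ)

/-- The standard Hermitian product `⟨z,w⟩ = Σ_j z_j conj(w_j)` on `ℂⁿ`. -/
def herm {n : ℕ} (z w : En n) : ℂ := ∑ j, z j * (starRingEnd ℂ) (w j)

/-- The Stolz region at `σ ∈ ∂𝔻` with aperture `M`. -/
def stolzAt (σ : ℂ) (M : ℝ) : Set ℂ :=
  {ζ ∈ unitDisc | ‖σ - ζ‖ < M * (1 - ‖ζ‖)}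

/-- Non-tangential (angular) limit of `g` at `σ ∈ ∂𝔻`: limit within every Stolz region. -/
def NTLim {α : Type*} [TopologicalSpace α] (g : ℂ → α) (σ : ℂ) (a : α) : Prop :=
  ∀ M : ℝ, 1 < M → Tendsto g (𝓝[stolzAt σ M] σ) (𝓝 a)

/-- `ξ ∈ ∂D` is a point of locally finite type: near `ξ` the boundary is `C^L`-smooth
(with a `C^L` local defining function with nonvanishing differential) and the order of
vanishing of the defining function along every complex line through a nearby boundary
point is at most `L`. -/
def IsLocallyFiniteType {n : ℕ} (D : Set (En n)) (ξ : En n) : Prop :=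
  ξ ∈ frontier D ∧ ∃ L : ℕ, 2 ≤ L ∧ ∃ U : Set (En n), IsOpen U ∧ ξ ∈ U ∧
    ∃ r : En n → ℝ, ContDiffOn ℝ L r U ∧ (∀ x ∈ U, (x ∈ D ↔ r x < 0)) ∧
      (∀ x ∈ frontier D ∩ U, fderiv ℝ r x ≠ 0) ∧
      (∀ η ∈ frontier D ∩ U, ∀ v : En n, v ≠ 0 →
        ¬ (fun ζ : ℂ => r (η + ζ • v)) =o[𝓝 (0 : ℂ)] fun ζ : ℂ => ‖ζ‖ ^ L)

/-- `nor` is the outer unit normal of the convex domain `D` at `ξ ∈ ∂D`: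
a unit vector whose associated real supporting hyperplane at `ξ` keeps `D` strictly
on its negative side. -/
def IsOuterUnitNormal {n : ℕ} (D : Set (En n)) (ξ nor : En n) : Prop :=
  ‖nor‖ = 1 ∧ ∀ z ∈ D, (herm (z - ξ) nor).re < 0

/-- `Ω` is the pluricomplex Poisson kernel of `D` at `ξ` (with outer unit normal `nor`):
`Ω(z) = −1/φ'_N(1)` for any complex geodesic `φ` with `φ(0) = z` and endpoint `ξ`, where
`φ'_N(1)` is the non-tangential limit of `⟨φ'(ζ), n_ξ⟩` at `1`. -/
def IsPoissonKernel {n : ℕ} (D : Set (En n)) (ξ nor : En n) (Ω : En n → ℝ) : Prop :=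
  ∀ z ∈ D, ∀ φ : ℂ → En n, IsComplexGeodesic D φ → φ 0 = z → HasEndpoint φ ξ →
    ∀ a : ℝ, 0 < a → NTLim (fun ζ => herm (deriv φ ζ) nor) 1 (a : ℂ) → Ω z = -1 / a

/-- `h` is the horofunction of `D` with center `ξ` and base-point `p`:
`h(z) = lim_{w→ξ} [k_D(z,w) − k_D(w,p)]`. -/
def IsHorofunction {n : ℕ} (D : Set (En n)) (ξ p : En n) (h : En n → ℝ) : Prop :=
  ∀ z ∈ D, Tendsto (fun w => kob D z w - kob D w p) (𝓝[D] ξ) (𝓝 (h z))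

/-- Euclidean distance to the boundary of `D`. -/
def deltaD {E : Type*} [NormedAddCommGroup E] [NormedSpace ℂ E] (D : Set E) (z : E) : ℝ :=
  Metric.infDist z (frontier D)

lemma key10 (s t : ℝ) (hs0 : 0 < s) (hs1 : s < 1) (ht0 : 0 < t) (ht1 : t < 1) :
    Real.log ((1 + (s - t) / (s + t - s * t)) / (1 - (s - t) / (s + t - s * t)))
      ≤ Real.log (s / t) - Real.log (1 - s / 2) := by
  have hd : 0 < s + t - s * t := by nlinarith
  have e1 : 1 + (s - t) / (s + t - s * t) = (s * (2 - t)) / (s + t - s * t) := by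
    field_simp; ring
  have e2 : 1 - (s - t) / (s + t - s * t) = (t * (2 - s)) / (s + t - s * t) := by
    field_simp; ring
  rw [e1, e2, div_div_div_comm, div_self hd.ne', div_one]
  have h2s : (0:ℝ) < 2 - s := by linarith
  have h2t : (0:ℝ) < 2 - t := by linarith
  have hhalf : 1 - s / 2 = (2 - s) / 2 := by ring
  rw [Real.log_div (by positivity) (by positivity), Real.log_mul hs0.ne' h2t.ne',
    Real.log_mul ht0.ne' h2s.ne', Real.log_div hs0.ne' ht0.ne', hhalf,
    Real.log_div h2s.ne' (by norm_num)]
  have : Real.log (2 - t) ≤ Real.log 2 := Real.log_le_log (by linarith) (by linarith)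
  linarith

lemma key10' (s t : ℝ) (hs0 : 0 < s) (hs1 : s < 1) (ht0 : 0 < t) (ht1 : t < 1) :
    Real.log ((1 + |s - t| / (s + t - s * t)) / (1 - |s - t| / (s + t - s * t)))
      ≤ |Real.log (s / t)| - Real.log (1 - max s t / 2) := by
  rcases le_total t s with h | h
  · rw [abs_of_nonneg (by linarith : (0:ℝ) ≤ s - t), max_eq_left h,
      abs_of_nonneg (Real.log_nonneg ((one_le_div ht0).mpr h))]
    exact key10 s t hs0 hs1 ht0 ht1
  · have hlog : Real.log (s / t) ≤ 0 :=
      Real.log_nonpos (by positivity) ((div_le_one ht0).mpr h)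
    rw [abs_of_nonpos (by linarith : s - t ≤ 0), max_eq_right h, abs_of_nonpos hlog]
    have hst : -(s - t) = t - s := by ring
    have hden : s + t - s * t = t + s - t * s := by ring
    have hlog2 : -Real.log (s / t) = Real.log (t / s) := by
      rw [Real.log_div hs0.ne' ht0.ne', Real.log_div ht0.ne' hs0.ne']; ring
    rw [hst, hden, hlog2]
    exact key10 t s ht0 ht1 hs0 hs1

lemma poincare_nonneg (z w : ℂ) : 0 ≤ poincareDist z w := by
  unfold poincareDist
  set m := ‖z - w‖ / ‖1 - (starRingEnd ℂ) w * z‖ with hm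
  have hm0 : 0 ≤ m := div_nonneg (norm_nonneg _) (norm_nonneg _)
  rcases eq_or_ne (1 - m) 0 with h | h
  · rw [h, div_zero, Real.log_zero]
  · rw [← Real.log_abs, abs_div, abs_of_nonneg (by linarith)]
    apply Real.log_nonneg
    rw [le_div_iff₀ (abs_pos.mpr h), one_mul, abs_le]
    constructor <;> linarith

/-- if the ball `B(η̂ − r·n, r)` is contained in `D` and `z = η̂ − a·n`,
`w = η̂ − b·n` with `δ_D(z) = a`, `δ_D(w) = b`, `0 < a, b < r`, then
`k_D(z,w) ≤ |log(a/b)| − log(1 − max(a,b)/(2r))`. -/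
theorem stmt10 {n : ℕ} (D : Set (En n)) (hD : IsCProperConvex D)
    (ηh : En n) (hη : ηh ∈ frontier D) (v : En n) (hv : ‖v‖ = 1)
    (r : ℝ) (hr : 0 < r) (hball : Metric.ball (ηh - r • v) r ⊆ D)
    (a b : ℝ) (ha : 0 < a) (har : a < r) (hb : 0 < b) (hbr : b < r)
    (hda : deltaD D (ηh - a • v) = a) (hdb : deltaD D (ηh - b • v) = b) :
    kob D (ηh - a • v) (ηh - b • v) ≤
      |Real.log (a / b)| - Real.log (1 - max a b / (2 * r)) := by
  have hrne : r ≠ 0 := hr.ne'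
  set s := a / r with hs
  set t := b / r with ht
  have hs0 : 0 < s := div_pos ha hr
  have hs1 : s < 1 := (div_lt_one hr).mpr har
  have ht0 : 0 < t := div_pos hb hr
  have ht1 : t < 1 := (div_lt_one hr).mpr hbr
  have hd : 0 < s + t - s * t := by nlinarith
  -- the analytic disc
  set φ : ℂ → En n := fun ζ => (ηh - r • v) + ζ • ((r : ℝ) • v) with hφ
  have heval : ∀ x : ℝ, φ ((x : ℝ) : ℂ) = ηh - ((1 - x) * r) • v := by
    intro x
    have h1 : ((x : ℝ) : ℂ) • ((r : ℝ) • v) = (x * r) • v := by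
      rw [Complex.coe_smul, smul_smul]
    rw [hφ]; dsimp only; rw [h1]
    have : (1 - x) * r = r - x * r := by ring
    rw [this, sub_smul]; abel
  have hmaps : MapsTo φ unitDisc D := by
    intro ζ hζ
    apply hball
    rw [Metric.mem_ball, dist_eq_norm]
    have : φ ζ - (ηh - r • v) = ζ • ((r : ℝ) • v) := by
      rw [hφ]; exact add_sub_cancel_left _ _
    rw [this, norm_smul, norm_smul, hv, Real.norm_eq_abs, abs_of_pos hr, mul_one]
    have hζ1 : ‖ζ‖ < 1 := by
      rw [unitDisc, Metric.mem_ball, dist_zero_right] at hζ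
      exact hζ
    calc ‖ζ‖ * r < 1 * r := by exact mul_lt_mul_of_pos_right hζ1 hr
    _ = r := one_mul r
  have hdiff : DifferentiableOn ℂ φ unitDisc := by
    apply Differentiable.differentiableOn
    exact (differentiable_const _).add (differentiable_id.smul_const _)
  have hmemdisc : ∀ x : ℝ, 0 < x → x < 1 → ((1 - x : ℝ) : ℂ) ∈ unitDisc := by
    intro x hx0 hx1
    rw [unitDisc, Metric.mem_ball, dist_zero_right, Complex.norm_real, Real.norm_eq_abs,
      abs_lt]
    constructor <;> linarith
  have hz : φ ((1 - s : ℝ) : ℂ) = ηh - a • v := by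
    rw [heval]
    congr 2
    rw [hs]; field_simp; ring
  have hw : φ ((1 - t : ℝ) : ℂ) = ηh - b • v := by
    rw [heval]
    congr 2
    rw [ht]; field_simp; ring
  have hbdd : BddBelow { c | ∃ ψ : ℂ → En n, DifferentiableOn ℂ ψ unitDisc ∧
      MapsTo ψ unitDisc D ∧ ∃ ζ₁ ∈ unitDisc, ∃ ζ₂ ∈ unitDisc,
      ψ ζ₁ = (ηh - a • v) ∧ ψ ζ₂ = (ηh - b • v) ∧ c = poincareDist ζ₁ ζ₂ } := by
    refine ⟨0, ?_⟩
    rintro c ⟨ψ, -, -, ζ₁, -, ζ₂, -, -, -, rfl⟩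
    exact poincare_nonneg ζ₁ ζ₂
  have hkob : kob D (ηh - a • v) (ηh - b • v) ≤
      poincareDist (((1 - s : ℝ) : ℂ)) (((1 - t : ℝ) : ℂ)) := by
    apply csInf_le hbdd
    exact ⟨φ, hdiff, hmaps, _, hmemdisc s hs0 hs1, _, hmemdisc t ht0 ht1, hz, hw, rfl⟩
  have hpd : poincareDist (((1 - s : ℝ) : ℂ)) (((1 - t : ℝ) : ℂ)) =
      Real.log ((1 + |s - t| / (s + t - s * t)) / (1 - |s - t| / (s + t - s * t))) := by
    unfold poincareDist
    have hA : ‖(((1 - s : ℝ) : ℂ)) - (((1 - t : ℝ) : ℂ))‖ = |s - t| := by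
      rw [show (((1 - s : ℝ) : ℂ)) - (((1 - t : ℝ) : ℂ)) = ((t - s : ℝ) : ℂ) by
        push_cast; ring, Complex.norm_real, Real.norm_eq_abs, abs_sub_comm]
    have hB : ‖1 - (starRingEnd ℂ) (((1 - t : ℝ) : ℂ)) * (((1 - s : ℝ) : ℂ))‖
        = s + t - s * t := by
      rw [show (1 : ℂ) - (starRingEnd ℂ) (((1 - t : ℝ) : ℂ)) * (((1 - s : ℝ) : ℂ))
          = ((s + t - s * t : ℝ) : ℂ) by rw [Complex.conj_ofReal]; push_cast; ring,
        Complex.norm_real, Real.norm_eq_abs, abs_of_pos hd]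
    rw [hA, hB]
  have hrhs1 : s / t = a / b := by
    rw [hs, ht]; field_simp
  have hrhs2 : max s t / 2 = max a b / (2 * r) := by
    rw [hs, ht, max_div_div_right hr.le, div_div, mul_comm]
  have := key10' s t hs0 hs1 ht0 ht1
  rw [hpd] at hkob
  rw [hrhs1, hrhs2] at this
  linarith
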